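/- arXiv:1507.03525 — 5 statements merged into one kernel-verified Lean document; each statement's English description precedes it below -/
import Mathlib

section
/- Let V₁, …, Vₙ be non-negative independent random variables such that P(Vᵢ > 1) ≥ q for all i, for some q ∈ (0, 1/2). Then there exist absolute constants c, c' > 0 such that P(∑ⱼ Vⱼ ≤ c·q·n / log(1/q)) ≤ exp(−c'·q·n). -/
open MeasureTheory ProbabilityTheory

/-- Tensorization lemma: if `V₁, …, Vₙ` are non-negative independent random variables with
`P(Vᵢ > 1) ≥ q` for all `i`, where `q ∈ (0, 1/2)`, then there are absolute constants
`c, c' > 0` with `P(∑ⱼ Vⱼ ≤ c·q·n / log(1/q)) ≤ exp(−c'·q·n)`. -/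
theorem stmt0 :
    ∃ c c' : ℝ, 0 < c ∧ 0 < c' ∧
      ∀ (Ω : Type) [MeasureSpace Ω] [IsProbabilityMeasure (ℙ : Measure Ω)]
        (n : ℕ) (q : ℝ), q ∈ Set.Ioo (0 : ℝ) (1/2) →
        ∀ (V : Fin n → Ω → ℝ), (∀ i, Measurable (V i)) →
          (∀ i ω, 0 ≤ V i ω) →
          ProbabilityTheory.iIndepFun V ℙ →
          (∀ i, q ≤ (ℙ {ω | 1 < V i ω}).toReal) →
          (ℙ {ω | ∑ j, V j ω ≤ c * q * n / Real.log (1/q)}).toReal ≤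
            Real.exp (-c' * q * n) := by
  refine ⟨1/4, 1/4, by norm_num, by norm_num, ?_⟩
  intro Ω _ _ n q hq V hmeas hpos hindep hprob
  obtain ⟨hq0, hq2⟩ := hq
  have hq1 : q < 1 := by linarith
  set t : ℝ := Real.log q with ht_def
  have ht : t < 0 := Real.log_neg hq0 hq1
  have hlog : Real.log (1/q) = -t := by rw [one_div, Real.log_inv]
  have hexp_t : Real.exp t = q := Real.exp_log hq0
  -- integrability of exp (t * V i ·)
  have hint : ∀ (f : Ω → ℝ), Measurable f → (∀ ω, 0 ≤ f ω) →
      Integrable (fun ω => Real.exp (t * f ω)) ℙ := by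
    intro f hf hf0
    refine Integrable.mono' (integrable_const 1)
      ((hf.const_mul t).exp.aestronglyMeasurable) (ae_of_all _ fun ω => ?_)
    rw [Real.norm_eq_abs, abs_of_pos (Real.exp_pos _)]
    exact Real.exp_le_one_iff.mpr (mul_nonpos_of_nonpos_of_nonneg ht.le (hf0 ω))
  have hsum_meas : Measurable (fun ω => ∑ j, V j ω) := by
    exact Finset.measurable_sum _ fun i _ => hmeas i
  have hsum_pos : ∀ ω, (0:ℝ) ≤ ∑ j, V j ω := fun ω =>
    Finset.sum_nonneg fun i _ => hpos i ω
  set ε : ℝ := 1/4 * q * n / Real.log (1/q) with hε_def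
  have hchernoff := measure_le_le_exp_mul_mgf (X := fun ω => ∑ j, V j ω) (μ := ℙ) (t := t)
    ε ht.le (hint _ hsum_meas hsum_pos)
  -- mgf of sum = product of mgf
  have hmgf_sum : mgf (fun ω => ∑ j, V j ω) ℙ t = ∏ i, mgf (V i) ℙ t := by
    have := hindep.mgf_sum (t := t) hmeas Finset.univ
    have heq : (fun ω => ∑ j, V j ω) = ∑ i : Fin n, V i := by
      funext ω; simp
    rw [heq]; exact this
  -- bound each mgf
  have hmgf_le : ∀ i, mgf (V i) ℙ t ≤ 1 - (1 - q) * q := by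
    intro i
    have hsetm : MeasurableSet {ω | 1 < V i ω} := measurableSet_lt measurable_const (hmeas i)
    have hind_int : Integrable ({ω | 1 < V i ω}.indicator (fun _ => (1:ℝ))) ℙ :=
      (integrable_const (1:ℝ)).indicator hsetm
    have hg_int : Integrable (fun ω => 1 - (1 - q) * {ω | 1 < V i ω}.indicator (fun _ => (1:ℝ)) ω) ℙ :=
      (integrable_const (1:ℝ)).sub (hind_int.const_mul _)
    have hle : ∀ ω, Real.exp (t * V i ω) ≤
        1 - (1 - q) * {ω | 1 < V i ω}.indicator (fun _ => (1:ℝ)) ω := by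
      intro ω
      by_cases h : 1 < V i ω
      · have hm : ω ∈ {ω | 1 < V i ω} := h
        rw [Set.indicator_of_mem hm]
        have : Real.exp (t * V i ω) ≤ Real.exp (t * 1) := by
          apply Real.exp_le_exp.mpr
          nlinarith
        rw [mul_one, hexp_t] at this
        linarith
      · have hm : ω ∉ {ω | 1 < V i ω} := h
        rw [Set.indicator_of_notMem hm]
        simp only [mul_zero, sub_zero]
        exact Real.exp_le_one_iff.mpr (mul_nonpos_of_nonpos_of_nonneg ht.le (hpos i ω))
    have h1 : mgf (V i) ℙ t ≤
        ∫ ω, (1 - (1 - q) * {ω | 1 < V i ω}.indicator (fun _ => (1:ℝ)) ω) ∂ℙ := by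
      exact integral_mono (hint _ (hmeas i) (hpos i)) hg_int hle
    have h2 : ∫ ω, (1 - (1 - q) * {ω | 1 < V i ω}.indicator (fun _ => (1:ℝ)) ω) ∂ℙ
        = 1 - (1 - q) * (ℙ {ω | 1 < V i ω}).toReal := by
      rw [integral_sub (integrable_const 1) (hind_int.const_mul _), integral_const,
        integral_const_mul]
      have : ∫ ω, {ω | 1 < V i ω}.indicator (fun _ => (1:ℝ)) ω ∂ℙ
          = (ℙ {ω | 1 < V i ω}).toReal := by
        simpa [measureReal_def, Pi.one_def] using integral_indicator_one (μ := (ℙ : Measure Ω)) hsetm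
      simp [this]
    rw [h2] at h1
    have := hprob i
    nlinarith
  -- combine
  have hbase_nonneg : (0:ℝ) ≤ 1 - (1 - q) * q := by nlinarith
  have hprod_le : (∏ i, mgf (V i) ℙ t) ≤ (1 - (1 - q) * q) ^ n := by
    calc (∏ i, mgf (V i) ℙ t) ≤ ∏ _i : Fin n, (1 - (1 - q) * q) :=
          Finset.prod_le_prod (fun i _ => mgf_nonneg) (fun i _ => hmgf_le i)
      _ = (1 - (1 - q) * q) ^ n := by simp
  have hbase_le : 1 - (1 - q) * q ≤ Real.exp (-(1 - q) * q) := by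
    have := Real.add_one_le_exp (-(1 - q) * q)
    linarith
  have hpow_le : (1 - (1 - q) * q) ^ n ≤ Real.exp (-(1 - q) * q * n) := by
    calc (1 - (1 - q) * q) ^ n ≤ (Real.exp (-(1 - q) * q)) ^ n :=
          pow_le_pow_left₀ hbase_nonneg hbase_le n
      _ = Real.exp (-(1 - q) * q * n) := by
          rw [← Real.exp_nat_mul]; ring_nf
  have hεt : -t * ε = 1/4 * q * n := by
    rw [hε_def, hlog]
    have ht' : t ≠ 0 := ht.ne
    field_simp
  rw [hmgf_sum] at hchernoff
  calc (ℙ {ω | ∑ j, V j ω ≤ 1/4 * q * ↑n / Real.log (1/q)}).toReal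
      ≤ Real.exp (-t * ε) * ∏ i, mgf (V i) ℙ t := hchernoff
    _ ≤ Real.exp (1/4 * q * n) * Real.exp (-(1 - q) * q * n) := by
        rw [hεt]
        exact mul_le_mul_of_nonneg_left (hprod_le.trans hpow_le) (Real.exp_pos _).le
    _ ≤ Real.exp (-(1/4) * q * n) := by
        rw [← Real.exp_add]
        apply Real.exp_le_exp.mpr
        have hn : (0:ℝ) ≤ n := Nat.cast_nonneg n
        nlinarith [mul_nonneg (mul_nonneg (by linarith : (0:ℝ) ≤ 1/2 - q) hq0.le) hn]
end

section
/- Let x ∈ ℝⁿ with ‖x‖₂ = 1, let p ∈ (0,1) and δ₀ ∈ (0,1), and define the least common denominator D(x) := inf { θ > 0 : dist(θx, ℤⁿ) < (δ₀ p)^{-1/2} · sqrt(max(0, log(sqrt(δ₀ p) · θ))) }. Then D(x) ≥ 1 / (2‖x‖_∞). -/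
open MeasureTheory

/-- Lower bound for the least common denominator: for a unit vector `x ∈ ℝⁿ`, with
`D(x) = inf {θ > 0 : dist(θx, ℤⁿ) < (δ₀p)^{-1/2} √(log₊(√(δ₀p) θ))}`, one has
`D(x) ≥ 1/(2‖x‖_∞)`. -/
theorem stmt1 (n : ℕ) (hn : 0 < n) (x : EuclideanSpace ℝ (Fin n)) (hx : ‖x‖ = 1)
    (p δ₀ : ℝ) (hp : p ∈ Set.Ioo (0:ℝ) 1) (hδ₀ : δ₀ ∈ Set.Ioo (0:ℝ) 1) :
    1 / (2 * ⨆ i, |x i|) ≤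
      sInf {θ : ℝ | 0 < θ ∧ ∃ z : Fin n → ℤ,
        ‖θ • x - (WithLp.equiv 2 (Fin n → ℝ)).symm (fun i => (z i : ℝ))‖ <
          (δ₀ * p) ^ (-(1/2 : ℝ)) *
            Real.sqrt (max 0 (Real.log (Real.sqrt (δ₀ * p) * θ)))} := by
  obtain ⟨hp0, hp1⟩ := hp
  obtain ⟨hd0, hd1⟩ := hδ₀
  set q := δ₀ * p with hqdef
  have hq0 : 0 < q := mul_pos hd0 hp0
  have hsq0 : 0 < Real.sqrt q := Real.sqrt_pos.mpr hq0
  have hqpow : q ^ (-(1/2 : ℝ)) = (Real.sqrt q)⁻¹ := by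
    rw [Real.sqrt_eq_rpow, ← Real.rpow_neg_one, ← Real.rpow_mul hq0.le]
    norm_num
  have hnorm : ∀ (θ : ℝ) (z : Fin n → ℤ),
      ‖θ • x - (WithLp.equiv 2 (Fin n → ℝ)).symm (fun i => (z i : ℝ))‖
        = Real.sqrt (∑ i, (θ * x i - z i)^2) := by
    intro θ z
    rw [EuclideanSpace.norm_eq]
    congr 1
    refine Finset.sum_congr rfl fun i _ => ?_
    simp [Real.norm_eq_abs, sq_abs]
  have hx2 : ∑ i, (x i)^2 = 1 := by
    have := EuclideanSpace.norm_eq x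
    rw [hx] at this
    have h2 : Real.sqrt (∑ i, ‖x i‖^2) = 1 := this.symm
    have := Real.sqrt_eq_one.mp h2
    simpa [Real.norm_eq_abs, sq_abs] using this
  set M := ⨆ i, |x i| with hMdef
  have hMle : ∀ i, |x i| ≤ M := fun i =>
    le_ciSup (f := fun i => |x i|) (Set.Finite.bddAbove (Set.finite_range _)) i
  have hx0 : x ≠ 0 := by intro h; rw [h, norm_zero] at hx; norm_num at hx
  have hM0 : 0 < M := by
    by_contra h
    push_neg at h
    apply hx0
    ext i
    have h1 := hMle i
    have := abs_nonneg (x i)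
    have : |x i| = 0 := le_antisymm (h1.trans h) this
    simpa using abs_eq_zero.mp this
  apply le_csInf
  · -- nonempty: θ = (√q)⁻¹ * exp(q*n)
    set θ := (Real.sqrt q)⁻¹ * Real.exp (q * n) with hθdef
    have hθ0 : 0 < θ := mul_pos (inv_pos.mpr hsq0) (Real.exp_pos _)
    refine ⟨θ, hθ0, fun i => round (θ * x i), ?_⟩
    rw [hnorm]
    have hs : Real.sqrt q * θ = Real.exp (q * n) := by
      rw [hθdef, ← mul_assoc, mul_inv_cancel₀ hsq0.ne', one_mul]
    have hqn : 0 < q * n := mul_pos hq0 (by exact_mod_cast hn)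
    have hlog : Real.log (Real.sqrt q * θ) = q * n := by
      rw [hs, Real.log_exp]
    rw [hlog, max_eq_right hqn.le, hqpow]
    have hrhs : (Real.sqrt q)⁻¹ * Real.sqrt (q * n) = Real.sqrt n := by
      rw [Real.sqrt_mul hq0.le]
      field_simp
    rw [hrhs]
    have hb : ∑ i, (θ * x i - round (θ * x i))^2 ≤ (n : ℝ) * (1/2)^2 := by
      calc ∑ i, (θ * x i - round (θ * x i))^2
          ≤ ∑ _i : Fin n, ((1:ℝ)/2)^2 := by
            refine Finset.sum_le_sum fun i _ => ?_
            have := abs_sub_round (θ * x i)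
            have h1 : |θ * x i - round (θ * x i)| ≤ 1/2 := this
            exact sq_le_sq' (abs_le.mp h1).1 (abs_le.mp h1).2
        _ = (n : ℝ) * (1/2)^2 := by simp [Finset.sum_const, mul_comm]
    calc Real.sqrt (∑ i, (θ * x i - round (θ * x i))^2)
        ≤ Real.sqrt ((n:ℝ) * (1/2)^2) := Real.sqrt_le_sqrt hb
      _ = Real.sqrt n * (1/2) := by
          rw [Real.sqrt_mul (by positivity), Real.sqrt_sq (by norm_num : (0:ℝ) ≤ 1/2)]
      _ < Real.sqrt n := by
          have : 0 < Real.sqrt n := Real.sqrt_pos.mpr (by exact_mod_cast hn)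
          linarith
  · rintro θ ⟨hθ0, z, hz⟩
    by_contra hlt
    push_neg at hlt
    rw [lt_div_iff₀ (by positivity)] at hlt
    -- hlt : θ * (2 * M) < 1
    have hsmall : ∀ i, |θ * x i| < 1/2 := by
      intro i
      have h1 : θ * |x i| ≤ θ * M := mul_le_mul_of_nonneg_left (hMle i) hθ0.le
      rw [abs_mul, abs_of_pos hθ0]
      nlinarith
    have hcoord : ∀ i, (θ * x i)^2 ≤ (θ * x i - z i)^2 := by
      intro i
      have h1 := hsmall i
      have h2 : |θ * x i| ≤ |θ * x i - z i| := by
        rcases eq_or_ne (z i) 0 with h0 | h0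
        · simp [h0]
        · have hm : (1:ℝ) ≤ |((z i : ℤ) : ℝ)| := by exact_mod_cast Int.one_le_abs h0
          have := abs_sub_abs_le_abs_sub ((z i : ℤ) : ℝ) (θ * x i)
          have h3 : |θ * x i - z i| = |((z i : ℤ) : ℝ) - θ * x i| := abs_sub_comm _ _
          linarith
      calc (θ * x i)^2 = |θ * x i|^2 := (sq_abs _).symm
        _ ≤ |θ * x i - z i|^2 := by nlinarith [abs_nonneg (θ * x i)]
        _ = (θ * x i - z i)^2 := sq_abs _
    have hsum : θ^2 ≤ ∑ i, (θ * x i - z i)^2 := by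
      calc θ^2 = θ^2 * ∑ i, (x i)^2 := by rw [hx2]; ring
        _ = ∑ i, (θ * x i)^2 := by rw [Finset.mul_sum]; exact Finset.sum_congr rfl fun i _ => by ring
        _ ≤ ∑ i, (θ * x i - z i)^2 := Finset.sum_le_sum fun i _ => hcoord i
    have hθle : θ ≤ ‖θ • x - (WithLp.equiv 2 (Fin n → ℝ)).symm fun i => ((z i : ℤ) : ℝ)‖ := by
      rw [hnorm]
      calc θ = Real.sqrt (θ^2) := (Real.sqrt_sq hθ0.le).symm
        _ ≤ _ := Real.sqrt_le_sqrt hsum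
    have hmain : θ < q ^ (-(1/2:ℝ)) * Real.sqrt (max 0 (Real.log (Real.sqrt q * θ))) :=
      lt_of_le_of_lt hθle hz
    set s := Real.sqrt q * θ with hsdef
    have hs0 : 0 < s := mul_pos hsq0 hθ0
    have hmain2 : s < Real.sqrt (max 0 (Real.log s)) := by
      rw [hqpow] at hmain
      calc s = Real.sqrt q * θ := rfl
        _ < Real.sqrt q * ((Real.sqrt q)⁻¹ * Real.sqrt (max 0 (Real.log s))) :=
            mul_lt_mul_of_pos_left hmain hsq0
        _ = Real.sqrt (max 0 (Real.log s)) := by field_simp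
    have hsq : s^2 < max 0 (Real.log s) := by
      have h1 : Real.sqrt (max 0 (Real.log s))^2 = max 0 (Real.log s) :=
        Real.sq_sqrt (le_max_left _ _)
      nlinarith [hs0]
    rcases le_or_gt (Real.log s) 0 with hls | hls
    · rw [max_eq_left hls] at hsq
      nlinarith
    · rw [max_eq_right hls.le] at hsq
      have := Real.log_le_sub_one_of_pos hs0
      nlinarith
end

section
/- Let A be an n × n real matrix with columns A₁, …, Aₙ, and for each j let Hⱼ be the span of the columns {Aᵢ : i ≠ j}. Then for any ε, ρ > 0 and any positive integer M < n, P( inf_{x ∈ Incomp(M, ρ)} ‖A x‖₂ ≤ ε ρ² √(p/n) ) ≤ (1/M) ∑_{j=1}^n P( dist(Aⱼ, Hⱼ) ≤ ρ √p ε ). -/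
open MeasureTheory ProbabilityTheory
open scoped ENNReal

section Aux

open ENNReal

/-- Deterministic core: an incompressible almost-null vector of `B` yields at least `M`
columns close to the span of the other columns. -/
lemma stmt4_det_lemma (n M : ℕ) (hM : 0 < M) (hMn : M < n)
    (B : Matrix (Fin n) (Fin n) ℝ)
    (p ε ρ : ℝ) (hp : p ∈ Set.Ioc (0:ℝ) 1) (hε : 0 < ε) (hρ : 0 < ρ)
    (x : EuclideanSpace ℝ (Fin n)) (hx : ‖x‖ = 1)
    (hinc : ¬ ∃ y : EuclideanSpace ℝ (Fin n),
        {i | y i ≠ 0}.ncard ≤ M ∧ ‖x - y‖ ≤ ρ)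
    (hAx : ‖(WithLp.equiv 2 (Fin n → ℝ)).symm (B.mulVec x)‖ ≤
        ε * ρ^2 * Real.sqrt (p / n)) :
    ∃ S : Finset (Fin n), M ≤ S.card ∧ ∀ j ∈ S,
      Metric.infDist ((WithLp.equiv 2 (Fin n → ℝ)).symm (fun i => B i j))
        (Submodule.span ℝ {v : EuclideanSpace ℝ (Fin n) |
          ∃ i, i ≠ j ∧ v = (WithLp.equiv 2 (Fin n → ℝ)).symm (fun k => B k i)} :
            Set (EuclideanSpace ℝ (Fin n))) ≤ ρ * Real.sqrt p * ε := by
  have hn : (0:ℝ) < n := by exact_mod_cast hM.trans hMn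
  have hsn : (0:ℝ) < Real.sqrt n := Real.sqrt_pos.mpr hn
  set S : Finset (Fin n) := Finset.univ.filter (fun j => ρ / Real.sqrt n < |x j|) with hS
  refine ⟨S, ?_, ?_⟩
  · -- card bound
    by_contra h
    push_neg at h
    apply hinc
    set y : EuclideanSpace ℝ (Fin n) :=
      (WithLp.equiv 2 (Fin n → ℝ)).symm (fun i => if i ∈ S then x i else 0) with hy
    have hyi : ∀ i, y i = if i ∈ S then x i else 0 := fun i => rfl
    refine ⟨y, ?_, ?_⟩
    · refine le_trans (le_trans (Set.ncard_le_ncard ?_ S.finite_toSet)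
        (le_of_eq (Set.ncard_coe_finset S))) (le_of_lt h)
      intro i hi
      simp only [Set.mem_setOf_eq, hyi] at hi
      by_contra hiS
      exact hi (if_neg hiS)
    · have hnorm : ‖x - y‖ = Real.sqrt (∑ i, ‖x i - (if i ∈ S then x i else 0)‖^2) := by
        rw [EuclideanSpace.norm_eq]
        exact congrArg Real.sqrt (Finset.sum_congr rfl fun i _ => by
          rw [show (x - y) i = x i - y i from rfl, hyi])
      rw [hnorm]
      have : ∑ i, ‖x i - (if i ∈ S then x i else 0)‖^2 ≤ ρ^2 := by
        have hbound : ∀ i : Fin n, ‖x i - (if i ∈ S then x i else 0)‖^2 ≤ (ρ / Real.sqrt n)^2 := by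
          intro i
          by_cases hi : i ∈ S
          · simp [hi]; positivity
          · simp only [hi, if_neg, if_false, sub_zero]
            have : |x i| ≤ ρ / Real.sqrt n := by
              simp only [hS, Finset.mem_filter, Finset.mem_univ, true_and, not_lt] at hi
              exact hi
            rw [Real.norm_eq_abs]
            exact pow_le_pow_left₀ (abs_nonneg _) this 2
        calc ∑ i, ‖x i - (if i ∈ S then x i else 0)‖^2
            ≤ ∑ _i : Fin n, (ρ / Real.sqrt n)^2 := Finset.sum_le_sum (fun i _ => hbound i)
          _ = n * (ρ / Real.sqrt n)^2 := by rw [Finset.sum_const]; simp [nsmul_eq_mul]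
          _ = ρ^2 := by
              rw [div_pow, Real.sq_sqrt (le_of_lt hn)]
              field_simp
      calc Real.sqrt (∑ i, ‖x i - (if i ∈ S then x i else 0)‖^2)
          ≤ Real.sqrt (ρ^2) := Real.sqrt_le_sqrt this
        _ = ρ := Real.sqrt_sq hρ.le
  · intro j hj
    have hxj : ρ / Real.sqrt n < |x j| := by
      simpa [hS] using hj
    have hxj0 : x j ≠ 0 := by
      intro h; rw [h] at hxj; simp only [abs_zero] at hxj
      have := div_pos hρ hsn; linarith
    set col : Fin n → EuclideanSpace ℝ (Fin n) :=
      fun k => (WithLp.equiv 2 (Fin n → ℝ)).symm (fun i => B i k) with hcol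
    have hsum : (WithLp.equiv 2 (Fin n → ℝ)).symm (B.mulVec x) = ∑ k, x k • col k := by
      ext i
      simp [hcol, Matrix.mulVec, dotProduct, mul_comm]
    set v : EuclideanSpace ℝ (Fin n) :=
      (-(x j)⁻¹) • ∑ k ∈ Finset.univ.erase j, x k • col k with hv
    have hvmem : v ∈ (Submodule.span ℝ {v : EuclideanSpace ℝ (Fin n) |
        ∃ i, i ≠ j ∧ v = (WithLp.equiv 2 (Fin n → ℝ)).symm (fun k => B k i)} :
          Set (EuclideanSpace ℝ (Fin n))) := by
      refine Submodule.smul_mem _ _ (Submodule.sum_mem _ ?_)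
      intro k hk
      refine Submodule.smul_mem _ _ (Submodule.subset_span ?_)
      exact ⟨k, (Finset.mem_erase.mp hk).1, rfl⟩
    have hdiff : col j - v = (x j)⁻¹ • (WithLp.equiv 2 (Fin n → ℝ)).symm (B.mulVec x) := by
      rw [hsum, hv, ← Finset.add_sum_erase _ _ (Finset.mem_univ j), smul_add,
        neg_smul, sub_neg_eq_add, smul_smul, inv_mul_cancel₀ hxj0, one_smul]
    have hdist : dist (col j) v ≤ ρ * Real.sqrt p * ε := by
      rw [dist_eq_norm, hdiff, norm_smul, norm_inv, Real.norm_eq_abs]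
      have h1 : ‖(WithLp.equiv 2 (Fin n → ℝ)).symm (B.mulVec x)‖ ≤
          ε * ρ^2 * (Real.sqrt p / Real.sqrt n) := by
        rwa [← Real.sqrt_div hp.1.le]
      have hxjpos : 0 < |x j| := lt_trans (by positivity) hxj
      rw [inv_mul_le_iff₀ hxjpos]
      calc ‖(WithLp.equiv 2 (Fin n → ℝ)).symm (B.mulVec x)‖
          ≤ ε * ρ^2 * (Real.sqrt p / Real.sqrt n) := h1
        _ = (ρ * Real.sqrt p * ε) * (ρ / Real.sqrt n) := by ring
        _ ≤ (ρ * Real.sqrt p * ε) * |x j| := by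
            apply mul_le_mul_of_nonneg_left hxj.le
            have := Real.sqrt_nonneg p
            positivity
        _ = |x j| * (ρ * Real.sqrt p * ε) := mul_comm _ _
    exact le_trans (Metric.infDist_le_dist_of_mem hvmem) hdist

/-- Counting/Markov lemma for measures. -/
lemma stmt4_count_meas {Ω : Type} [MeasureSpace Ω] {n M : ℕ} (F : Fin n → Set Ω)
    (hF : ∀ j, MeasurableSet (F j)) :
    (M : ℝ≥0∞) * ℙ {ω | (M:ℝ≥0∞) ≤ ∑ j, (F j).indicator 1 ω} ≤ ∑ j, ℙ (F j) := by
  have hmeas : ∀ j : Fin n, Measurable ((F j).indicator (1 : Ω → ℝ≥0∞)) :=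
    fun j => measurable_one.indicator (hF j)
  have hg : Measurable (fun ω => ∑ j, (F j).indicator (1 : Ω → ℝ≥0∞) ω) :=
    Finset.measurable_sum _ (fun j _ => hmeas j)
  set C := {ω | (M:ℝ≥0∞) ≤ ∑ j, (F j).indicator 1 ω} with hC
  calc (M : ℝ≥0∞) * ℙ C = ∫⁻ _ω in C, (M:ℝ≥0∞) ∂ℙ := (setLIntegral_const C _).symm
    _ ≤ ∫⁻ ω in C, (∑ j, (F j).indicator 1 ω) ∂ℙ :=
        setLIntegral_mono hg (fun ω hω => hω)
    _ ≤ ∫⁻ ω, (∑ j, (F j).indicator 1 ω) ∂ℙ := setLIntegral_le_lintegral _ _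
    _ = ∑ j, ∫⁻ ω, (F j).indicator 1 ω ∂ℙ := lintegral_finset_sum _ (fun j _ => hmeas j)
    _ = ∑ j, ℙ (F j) := Finset.sum_congr rfl (fun j _ => lintegral_indicator_one (hF j))

end Aux

/-- Invertibility via distance: for a random `n × n` matrix `A` with columns `Aⱼ` and
`Hⱼ = span{Aᵢ : i ≠ j}`, for any `ε, ρ > 0` and `M < n`,
`P(inf over Incomp(M,ρ) of ‖Ax‖₂ ≤ ερ²√(p/n)) ≤ (1/M) ∑ⱼ P(dist(Aⱼ, Hⱼ) ≤ ρ√p ε)`. -/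
theorem stmt4 (n M : ℕ) (hM : 0 < M) (hMn : M < n)
    (Ω : Type) [MeasureSpace Ω] [IsProbabilityMeasure (ℙ : Measure Ω)]
    (A : Ω → Matrix (Fin n) (Fin n) ℝ)
    (hmeas : ∀ i j, Measurable fun ω => A ω i j)
    (p ε ρ : ℝ) (hp : p ∈ Set.Ioc (0:ℝ) 1) (hε : 0 < ε) (hρ : 0 < ρ) :
    (ℙ {ω | ∃ x : EuclideanSpace ℝ (Fin n), ‖x‖ = 1 ∧
        (¬ ∃ y : EuclideanSpace ℝ (Fin n),
            {i | y i ≠ 0}.ncard ≤ M ∧ ‖x - y‖ ≤ ρ) ∧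
        ‖(WithLp.equiv 2 (Fin n → ℝ)).symm ((A ω).mulVec x)‖ ≤
          ε * ρ^2 * Real.sqrt (p / n)}).toReal ≤
      (1 / M) * ∑ j : Fin n, (ℙ {ω | Metric.infDist
          ((WithLp.equiv 2 (Fin n → ℝ)).symm (fun i => A ω i j))
          (Submodule.span ℝ {v : EuclideanSpace ℝ (Fin n) |
            ∃ i, i ≠ j ∧ v = (WithLp.equiv 2 (Fin n → ℝ)).symm (fun k => A ω k i)} :
              Set (EuclideanSpace ℝ (Fin n))) ≤ ρ * Real.sqrt p * ε}).toReal := by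
  classical
  set Ej : Fin n → Set Ω := fun j => {ω | Metric.infDist
      ((WithLp.equiv 2 (Fin n → ℝ)).symm (fun i => A ω i j))
      (Submodule.span ℝ {v : EuclideanSpace ℝ (Fin n) |
        ∃ i, i ≠ j ∧ v = (WithLp.equiv 2 (Fin n → ℝ)).symm (fun k => A ω k i)} :
          Set (EuclideanSpace ℝ (Fin n))) ≤ ρ * Real.sqrt p * ε} with hEj
  set F : Fin n → Set Ω := fun j => MeasureTheory.toMeasurable ℙ (Ej j) with hF
  have hFmeas : ∀ j, MeasurableSet (F j) := fun j => measurableSet_toMeasurable _ _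
  set bad : Set Ω := {ω | ∃ x : EuclideanSpace ℝ (Fin n), ‖x‖ = 1 ∧
      (¬ ∃ y : EuclideanSpace ℝ (Fin n),
          {i | y i ≠ 0}.ncard ≤ M ∧ ‖x - y‖ ≤ ρ) ∧
      ‖(WithLp.equiv 2 (Fin n → ℝ)).symm ((A ω).mulVec x)‖ ≤
        ε * ρ^2 * Real.sqrt (p / n)} with hbad
  -- bad ⊆ the counting set
  have hsub : bad ⊆ {ω | (M:ℝ≥0∞) ≤ ∑ j, (F j).indicator 1 ω} := by
    intro ω hω
    obtain ⟨x, hx, hinc, hAx⟩ := hω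
    obtain ⟨S, hScard, hSdist⟩ := stmt4_det_lemma n M hM hMn (A ω) p ε ρ hp hε hρ x hx hinc hAx
    have hmemF : ∀ j ∈ S, ω ∈ F j := fun j hj =>
      MeasureTheory.subset_toMeasurable ℙ (Ej j) (hSdist j hj)
    have h1 : (M:ℝ≥0∞) ≤ (S.card : ℝ≥0∞) := by exact_mod_cast hScard
    have h2 : (S.card : ℝ≥0∞) = ∑ j ∈ S, (F j).indicator 1 ω := by
      rw [Finset.card_eq_sum_ones, Nat.cast_sum]
      refine Finset.sum_congr rfl fun j hj => ?_
      rw [Set.indicator_of_mem (hmemF j hj)]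
      simp
    have h3 : ∑ j ∈ S, (F j).indicator (1 : Ω → ℝ≥0∞) ω ≤ ∑ j, (F j).indicator 1 ω :=
      Finset.sum_le_sum_of_subset (Finset.subset_univ S)
    exact le_trans h1 (le_trans (le_of_eq h2) h3)
  have hmain : (M : ℝ≥0∞) * ℙ bad ≤ ∑ j, ℙ (Ej j) := by
    calc (M : ℝ≥0∞) * ℙ bad
        ≤ (M : ℝ≥0∞) * ℙ {ω | (M:ℝ≥0∞) ≤ ∑ j, (F j).indicator 1 ω} :=
          mul_le_mul_right (measure_mono hsub) _
      _ ≤ ∑ j, ℙ (F j) := stmt4_count_meas F hFmeas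
      _ = ∑ j, ℙ (Ej j) := Finset.sum_congr rfl
          (fun j _ => measure_toMeasurable (Ej j))
  -- pass to toReal
  have hfin : ∀ j : Fin n, ℙ (Ej j) ≠ ⊤ := fun j => measure_ne_top _ _
  have hsumfin : (∑ j, ℙ (Ej j)) ≠ ⊤ := ENNReal.sum_ne_top.mpr fun j _ => hfin j
  have htR : (M:ℝ) * (ℙ bad).toReal ≤ ∑ j, (ℙ (Ej j)).toReal := by
    have := ENNReal.toReal_mono hsumfin hmain
    rwa [ENNReal.toReal_mul, ENNReal.toReal_natCast, ENNReal.toReal_sum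
      (fun j _ => hfin j)] at this
  have hMR : (0:ℝ) < M := by exact_mod_cast hM
  calc (ℙ bad).toReal = (1 / M) * ((M:ℝ) * (ℙ bad).toReal) := by field_simp
    _ ≤ (1 / M) * ∑ j, (ℙ (Ej j)).toReal := by
        apply mul_le_mul_of_nonneg_left htR
        positivity
end

section
/- Let x ∈ S^{n−1} and m < M ≤ n/2 with m ≤ M/2. Then √M · ‖x_{[M+1:n]}‖_∞ ≤ √2 · ‖x_{[m+1:M]}‖₂. -/
/-- For a unit vector `x` and `m < M ≤ n/2` with `m ≤ M/2`:
`√M ‖x_{[M+1:n]}‖_∞ ≤ √2 ‖x_{[m+1:M]}‖₂`, where `x_{[a:b]}` keeps the coordinates of `x`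
whose absolute values rank from `a` to `b` in non-increasing order (`σ` gives the
0-indexed ranks). -/
theorem stmt7 (n m M : ℕ) (hmM : m < M) (hm2 : 2 * m ≤ M) (hMn : 2 * M ≤ n)
    (x : Fin n → ℝ) (hx : ∑ j, (x j)^2 = 1)
    (σ : Equiv.Perm (Fin n))
    (hσ : ∀ i j : Fin n, i ≤ j → |x (σ.symm j)| ≤ |x (σ.symm i)|) :
    Real.sqrt M * (⨆ j : {j : Fin n // M ≤ (σ j : ℕ)}, |x (j : Fin n)|) ≤
      Real.sqrt 2 * Real.sqrt (∑ j ∈ Finset.univ.filter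
        (fun j : Fin n => m ≤ (σ j : ℕ) ∧ (σ j : ℕ) < M), (x j)^2) := by
  have hMn' : M < n := lt_of_lt_of_le (by omega) hMn
  set Mf : Fin n := ⟨M, hMn'⟩ with hMf
  set S : ℝ := |x (σ.symm Mf)| with hS
  have hS0 : 0 ≤ S := abs_nonneg _
  have hne : Nonempty {j : Fin n // M ≤ (σ j : ℕ)} := ⟨⟨σ.symm Mf, by simp [hMf]⟩⟩
  -- sup ≤ S
  have hsup : (⨆ j : {j : Fin n // M ≤ (σ j : ℕ)}, |x (j : Fin n)|) ≤ S := by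
    apply ciSup_le
    intro j
    have := hσ Mf (σ (j : Fin n)) (by exact j.2)
    simpa using this
  set T : Finset (Fin n) := Finset.univ.filter
      (fun j : Fin n => m ≤ (σ j : ℕ) ∧ (σ j : ℕ) < M) with hT
  -- card bound
  have hcard : M - m ≤ T.card := by
    have : (Finset.Ico m M).card ≤ T.card := by
      apply Finset.card_le_card_of_injOn
        (fun k => σ.symm ⟨k % n, Nat.mod_lt _ (by omega)⟩)
      · intro k hk
        simp only [Finset.mem_coe, Finset.mem_Ico] at hk
        have hk' : k % n = k := Nat.mod_eq_of_lt (by omega)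
        simp [hT, hk', hk.1, hk.2]
      · intro a ha b hb hab
        simp only [Finset.mem_coe, Finset.mem_Ico] at ha hb
        have h2 := congrArg Fin.val (σ.symm.injective hab)
        simp only at h2
        have ha' : a % n = a := Nat.mod_eq_of_lt (by omega)
        have hb' : b % n = b := Nat.mod_eq_of_lt (by omega)
        omega
    simpa using this
  -- each term in T is ≥ S^2
  have hterm : ∀ j ∈ T, S ^ 2 ≤ (x j) ^ 2 := by
    intro j hj
    simp only [hT, Finset.mem_filter] at hj
    have h' : σ j ≤ Mf := by
      rw [Fin.le_iff_val_le_val]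
      show (σ j : ℕ) ≤ M
      omega
    have h := hσ (σ j) Mf h'
    simp only [Equiv.symm_apply_apply] at h
    calc S ^ 2 ≤ |x j| ^ 2 := pow_le_pow_left₀ hS0 h 2
      _ = (x j) ^ 2 := sq_abs _
  have hsum : (M : ℝ) * S ^ 2 ≤ 2 * ∑ j ∈ T, (x j) ^ 2 := by
    have h1 : (T.card : ℝ) * S ^ 2 ≤ ∑ j ∈ T, (x j) ^ 2 := by
      calc (T.card : ℝ) * S ^ 2 = ∑ _j ∈ T, S ^ 2 := by
            rw [Finset.sum_const, nsmul_eq_mul]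
        _ ≤ ∑ j ∈ T, (x j) ^ 2 := Finset.sum_le_sum hterm
    have h2 : (M : ℝ) ≤ 2 * T.card := by
      have : M ≤ 2 * T.card := by omega
      exact_mod_cast this
    nlinarith [sq_nonneg S]
  -- conclude
  have hsum0 : 0 ≤ ∑ j ∈ T, (x j) ^ 2 := Finset.sum_nonneg fun j _ => sq_nonneg _
  calc Real.sqrt M * (⨆ j : {j : Fin n // M ≤ (σ j : ℕ)}, |x (j : Fin n)|)
      ≤ Real.sqrt M * S := by
        apply mul_le_mul_of_nonneg_left hsup (Real.sqrt_nonneg _)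
    _ = Real.sqrt ((M : ℝ) * S ^ 2) := by
        rw [Real.sqrt_mul (Nat.cast_nonneg _), Real.sqrt_sq hS0]
    _ ≤ Real.sqrt (2 * ∑ j ∈ T, (x j) ^ 2) := Real.sqrt_le_sqrt hsum
    _ = Real.sqrt 2 * Real.sqrt (∑ j ∈ T, (x j) ^ 2) := Real.sqrt_mul (by norm_num) _
end

section
/- Let ξ be a symmetric random variable with P(|ξ| > t) ≥ C t^{−ρ} for all large t (for some C > 0, ρ > 0), let δ_{ij} be i.i.d. Bernoulli(p) with p ∼ n^{−α}, α ∈ (0,1), and a_{ij} = δ_{ij} ξ_{ij} with ξ_{ij} i.i.d. copies of ξ independent of the δ's. If ν > 0 satisfies ρ(ν + (1−α)/2) < 2 − α, then P(max_{i,j∈[n]} |a_{ij}| ≤ n^ν √(np)) ≤ exp(−C'' n^μ) for some μ > 0 and C'' > 0 and all large n. -/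
open MeasureTheory ProbabilityTheory

/-- Lower bound failure probability for the spectral norm of sparse heavy-tailed matrices:
for a symmetric `ξ` with tail `P(|ξ| > t) ≥ C t^{−ρ}` (t large), `δ_{ij}` Bernoulli(p)
with `p ∼ n^{−α}`, and `ν > 0` with `ρ(ν + (1−α)/2) < 2 − α`, one has
`P(max_{ij} |δ_{ij} ξ_{ij}| ≤ n^ν √(np)) ≤ exp(−C'' n^μ)` for some `μ, C'' > 0` and all
large `n`. -/
theorem stmt9 (C ρ α ν : ℝ) (hC : 0 < C) (hρ : 0 < ρ) (hα : α ∈ Set.Ioo (0:ℝ) 1)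
    (hν : 0 < ν) (hcond : ρ * (ν + (1 - α)/2) < 2 - α)
    (c₁ c₂ t₀ : ℝ) (hc₁ : 0 < c₁) (hc₂ : 0 < c₂) (ht₀ : 0 < t₀) :
    ∃ μ C'' : ℝ, 0 < μ ∧ 0 < C'' ∧ ∃ N : ℕ, ∀ n : ℕ, N ≤ n →
    ∀ (p : ℝ), c₁ * (n:ℝ)^(-α) ≤ p → p ≤ c₂ * (n:ℝ)^(-α) → p ≤ 1 →
    ∀ (Ω : Type) [MeasureSpace Ω] [IsProbabilityMeasure (ℙ : Measure Ω)]
      (δ ξ : Fin n → Fin n → Ω → ℝ),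
      (∀ i j, Measurable (δ i j)) → (∀ i j, Measurable (ξ i j)) →
      (∀ i j, (ℙ {ω | δ i j ω = 1}).toReal = p ∧ ℙ {ω | δ i j ω = 1 ∨ δ i j ω = 0} = 1) →
      (∀ i j, ∀ t : ℝ, t₀ ≤ t → C * t^(-ρ) ≤ (ℙ {ω | t < |ξ i j ω|}).toReal) →
      ProbabilityTheory.iIndepFun
        (fun (ij : Fin n × Fin n) ω => (δ ij.1 ij.2 ω, ξ ij.1 ij.2 ω)) ℙ →
      (∀ i j, ProbabilityTheory.IndepFun (δ i j) (ξ i j) ℙ) →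
      (ℙ {ω | ∀ i j, |δ i j ω * ξ i j ω| ≤ (n:ℝ)^ν * Real.sqrt (n * p)}).toReal ≤
        Real.exp (-C'' * (n:ℝ)^μ) := by
  obtain ⟨hα0, hα1⟩ := hα
  set e : ℝ := ν + (1 - α)/2 with he
  have he_pos : 0 < e := by simp only [he]; linarith
  set μ0 : ℝ := 2 - α - ρ * e with hμ0
  have hμ0_pos : 0 < μ0 := by simp only [hμ0]; linarith
  set C'' : ℝ := C * c₁ * c₂ ^ (-(ρ/2)) with hC''
  have hC''_pos : 0 < C'' := by
    have : (0:ℝ) < c₂ ^ (-(ρ/2)) := Real.rpow_pos_of_pos hc₂ _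
    positivity
  -- choose N
  have htend : Filter.Tendsto (fun n : ℕ => Real.sqrt c₁ * (n:ℝ) ^ e)
      Filter.atTop Filter.atTop := by
    rw [Filter.tendsto_const_mul_atTop_of_pos (Real.sqrt_pos.2 hc₁)]
    exact (tendsto_rpow_atTop he_pos).comp tendsto_natCast_atTop_atTop
  obtain ⟨N₁, hN₁⟩ := Filter.eventually_atTop.1 (htend.eventually_ge_atTop t₀)
  refine ⟨μ0, C'', hμ0_pos, hC''_pos, max N₁ 1, ?_⟩
  intro n hn p hp₁ hp₂ hp3 Ω _ _ δ ξ hδm hξm hber htail hii hindep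
  have hn1 : 1 ≤ n := le_trans (le_max_right _ _) hn
  have npos : (0:ℝ) < n := by exact_mod_cast hn1
  have hppos : 0 < p := lt_of_lt_of_le (by positivity) hp₁
  set T : ℝ := (n:ℝ) ^ ν * Real.sqrt (n * p) with hT
  -- sqrt computation
  have hsq : ∀ c : ℝ, 0 < c →
      Real.sqrt ((n:ℝ) * (c * (n:ℝ) ^ (-α))) = Real.sqrt c * (n:ℝ) ^ ((1-α)/2) := by
    intro c hc
    rw [show (n:ℝ) * (c * (n:ℝ) ^ (-α)) = c * ((n:ℝ) ^ (1:ℝ) * (n:ℝ) ^ (-α)) by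
        rw [Real.rpow_one]; ring,
      ← Real.rpow_add npos, Real.sqrt_mul hc.le,
      Real.sqrt_eq_rpow ((n:ℝ) ^ (1 + -α)), ← Real.rpow_mul npos.le]
    congr 1
    ring
  have hT_lb : Real.sqrt c₁ * (n:ℝ) ^ e ≤ T := by
    have h1 : Real.sqrt ((n:ℝ) * (c₁ * (n:ℝ) ^ (-α))) ≤ Real.sqrt ((n:ℝ) * p) :=
      Real.sqrt_le_sqrt (by nlinarith)
    rw [hsq c₁ hc₁] at h1
    calc Real.sqrt c₁ * (n:ℝ) ^ e
        = (n:ℝ) ^ ν * (Real.sqrt c₁ * (n:ℝ) ^ ((1-α)/2)) := by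
          rw [he, Real.rpow_add npos]; ring
      _ ≤ T := by
          rw [hT]
          exact mul_le_mul_of_nonneg_left h1 (by positivity)
  have ht₀T : t₀ ≤ T := le_trans (hN₁ n (le_trans (le_max_left _ _) hn)) hT_lb
  have hTpos : 0 < T := lt_of_lt_of_le ht₀ ht₀T
  have hT_ub : T ≤ Real.sqrt c₂ * (n:ℝ) ^ e := by
    have h1 : Real.sqrt ((n:ℝ) * p) ≤ Real.sqrt ((n:ℝ) * (c₂ * (n:ℝ) ^ (-α))) :=
      Real.sqrt_le_sqrt (by nlinarith)
    rw [hsq c₂ hc₂] at h1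
    calc T ≤ (n:ℝ) ^ ν * (Real.sqrt c₂ * (n:ℝ) ^ ((1-α)/2)) :=
          mul_le_mul_of_nonneg_left h1 (by positivity)
      _ = Real.sqrt c₂ * (n:ℝ) ^ e := by rw [he, Real.rpow_add npos]; ring
  set r : ℝ := C * T ^ (-ρ) with hr
  have hr_pos : 0 < r := by
    have := Real.rpow_pos_of_pos hTpos (-ρ); positivity
  -- per-entry bound
  have hKmeas : MeasurableSet {q : ℝ × ℝ | |q.1 * q.2| ≤ T} :=
    measurableSet_le (measurable_fst.mul measurable_snd).abs measurable_const
  have entry : ∀ i j : Fin n,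
      (ℙ {ω | |δ i j ω * ξ i j ω| ≤ T}).toReal ≤ 1 - p * r := by
    intro i j
    set E : Set Ω := {ω | |δ i j ω * ξ i j ω| ≤ T} with hE
    have hEmeas : MeasurableSet E :=
      measurableSet_le ((hδm i j).mul (hξm i j)).abs measurable_const
    have hSmeas : MeasurableSet {x : ℝ | T < |x|} :=
      measurableSet_lt measurable_const measurable_abs
    have hsub : (δ i j ⁻¹' {1}) ∩ (ξ i j ⁻¹' {x : ℝ | T < |x|}) ⊆ Eᶜ := by
      intro ω ⟨h1, h2⟩
      simp only [Set.mem_preimage, Set.mem_singleton_iff] at h1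
      simp only [Set.mem_preimage, Set.mem_setOf_eq] at h2
      simp only [hE, Set.mem_compl_iff, Set.mem_setOf_eq, not_le, h1, one_mul]
      exact h2
    have hmul := (hindep i j).measure_inter_preimage_eq_mul (μ := ℙ)
      {1} {x : ℝ | T < |x|} (measurableSet_singleton (1:ℝ)) hSmeas
    have hδ1 : (ℙ (δ i j ⁻¹' {1})).toReal = p := by
      have := (hber i j).1
      simpa [Set.preimage, Set.mem_singleton_iff] using this
    have htail' : C * T ^ (-ρ) ≤ (ℙ (ξ i j ⁻¹' {x : ℝ | T < |x|})).toReal := by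
      have := htail i j T ht₀T
      simpa [Set.preimage] using this
    have hlow : p * r ≤ (ℙ Eᶜ).toReal := by
      have h1 : (ℙ ((δ i j ⁻¹' {1}) ∩ (ξ i j ⁻¹' {x : ℝ | T < |x|}))).toReal
          = p * (ℙ (ξ i j ⁻¹' {x : ℝ | T < |x|})).toReal := by
        rw [hmul, ENNReal.toReal_mul, hδ1]
      have h2 : p * r ≤ p * (ℙ (ξ i j ⁻¹' {x : ℝ | T < |x|})).toReal :=
        mul_le_mul_of_nonneg_left htail' hppos.le
      calc p * r ≤ (ℙ ((δ i j ⁻¹' {1}) ∩ (ξ i j ⁻¹' {x : ℝ | T < |x|}))).toReal := by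
            rw [h1]; exact h2
        _ ≤ (ℙ Eᶜ).toReal :=
            ENNReal.toReal_mono (measure_ne_top _ _) (measure_mono hsub)
    have hcompl : (ℙ Eᶜ).toReal = 1 - (ℙ E).toReal := by
      rw [prob_compl_eq_one_sub hEmeas,
        ENNReal.toReal_sub_of_le prob_le_one ENNReal.one_ne_top, ENNReal.toReal_one]
    linarith [hcompl ▸ hlow]
  -- product structure
  have hbig : {ω | ∀ i j, |δ i j ω * ξ i j ω| ≤ T}
      = ⋂ ij ∈ (Finset.univ : Finset (Fin n × Fin n)),
        (fun ω => (δ ij.1 ij.2 ω, ξ ij.1 ij.2 ω)) ⁻¹' {q : ℝ × ℝ | |q.1 * q.2| ≤ T} := by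
    ext ω
    simp [Set.mem_iInter, Prod.forall]
  have hprod := hii.measure_inter_preimage_eq_mul Finset.univ
    (sets := fun _ => {q : ℝ × ℝ | |q.1 * q.2| ≤ T}) (fun _ _ => hKmeas)
  have hfact : (ℙ {ω | ∀ i j, |δ i j ω * ξ i j ω| ≤ T}).toReal
      = ∏ ij : Fin n × Fin n,
        (ℙ {ω | |δ ij.1 ij.2 ω * ξ ij.1 ij.2 ω| ≤ T}).toReal := by
    rw [hbig, hprod, ENNReal.toReal_prod]
    rfl
  have hexp : ∀ ij : Fin n × Fin n,
      (ℙ {ω | |δ ij.1 ij.2 ω * ξ ij.1 ij.2 ω| ≤ T}).toReal ≤ Real.exp (-(p * r)) := by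
    intro ij
    refine le_trans (entry ij.1 ij.2) ?_
    linarith [Real.add_one_le_exp (-(p * r))]
  have hprodle : (ℙ {ω | ∀ i j, |δ i j ω * ξ i j ω| ≤ T}).toReal
      ≤ Real.exp (-(p * r)) ^ (n * n) := by
    rw [hfact]
    calc ∏ ij : Fin n × Fin n, (ℙ {ω | |δ ij.1 ij.2 ω * ξ ij.1 ij.2 ω| ≤ T}).toReal
        ≤ ∏ _ij : Fin n × Fin n, Real.exp (-(p * r)) :=
          Finset.prod_le_prod (fun ij _ => ENNReal.toReal_nonneg) (fun ij _ => hexp ij)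
      _ = Real.exp (-(p * r)) ^ (n * n) := by
          rw [Finset.prod_const, Finset.card_univ, Fintype.card_prod, Fintype.card_fin]
  -- final estimate
  have hkey : C'' * (n:ℝ) ^ μ0 ≤ (n * n : ℕ) * (p * r) := by
    have hT2 : (Real.sqrt c₂ * (n:ℝ) ^ e) ^ (-ρ) ≤ T ^ (-ρ) :=
      Real.rpow_le_rpow_of_nonpos hTpos hT_ub (by linarith)
    have hT2eq : (Real.sqrt c₂ * (n:ℝ) ^ e) ^ (-ρ)
        = c₂ ^ (-(ρ/2)) * (n:ℝ) ^ (-(ρ * e)) := by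
      rw [Real.mul_rpow (Real.sqrt_nonneg _) (by positivity),
        Real.sqrt_eq_rpow, ← Real.rpow_mul hc₂.le, ← Real.rpow_mul npos.le]
      congr 1 <;> ring
    have hexpand : C'' * (n:ℝ) ^ μ0
        = ((n:ℝ) * (n:ℝ)) * ((c₁ * (n:ℝ) ^ (-α)) *
            (C * (c₂ ^ (-(ρ/2)) * (n:ℝ) ^ (-(ρ * e))))) := by
      have : (n:ℝ) ^ μ0
          = (n:ℝ) ^ (1:ℝ) * ((n:ℝ) ^ (1:ℝ) * ((n:ℝ) ^ (-α) * (n:ℝ) ^ (-(ρ * e)))) := by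
        rw [← Real.rpow_add npos, ← Real.rpow_add npos, ← Real.rpow_add npos]
        congr 1
        simp only [hμ0]; ring
      rw [this, Real.rpow_one, hC'']
      ring
    have hx : (0:ℝ) ≤ c₂ ^ (-(ρ/2)) * (n:ℝ) ^ (-(ρ * e)) := by positivity
    have h1 : (c₁ * (n:ℝ) ^ (-α)) * (C * (c₂ ^ (-(ρ/2)) * (n:ℝ) ^ (-(ρ * e))))
        ≤ p * r := by
      rw [hr]
      have h2 : C * (c₂ ^ (-(ρ/2)) * (n:ℝ) ^ (-(ρ * e))) ≤ C * T ^ (-ρ) := by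
        rw [← hT2eq]
        exact mul_le_mul_of_nonneg_left hT2 hC.le
      have h3 : 0 ≤ C * (c₂ ^ (-(ρ/2)) * (n:ℝ) ^ (-(ρ * e))) := by positivity
      have h4 : 0 ≤ c₁ * (n:ℝ) ^ (-α) := by positivity
      calc (c₁ * (n:ℝ) ^ (-α)) * (C * (c₂ ^ (-(ρ/2)) * (n:ℝ) ^ (-(ρ * e))))
          ≤ p * (C * (c₂ ^ (-(ρ/2)) * (n:ℝ) ^ (-(ρ * e)))) :=
            mul_le_mul_of_nonneg_right hp₁ h3
        _ ≤ p * (C * T ^ (-ρ)) := mul_le_mul_of_nonneg_left h2 hppos.le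
    rw [hexpand]
    push_cast
    exact mul_le_mul_of_nonneg_left h1 (by positivity)
  calc (ℙ {ω | ∀ i j, |δ i j ω * ξ i j ω| ≤ T}).toReal
      ≤ Real.exp (-(p * r)) ^ (n * n) := hprodle
    _ = Real.exp (((n * n : ℕ) : ℝ) * (-(p * r))) := by
        rw [← Real.exp_nat_mul]
    _ ≤ Real.exp (-C'' * (n:ℝ) ^ μ0) := by
        apply Real.exp_le_exp.2
        have : ((n * n : ℕ) : ℝ) * (-(p * r)) = -(((n*n : ℕ):ℝ) * (p * r)) := by ring
        rw [this]
        linarith [hkey]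
end
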